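/- Let N be a positive integer, let Λ ⊂ Nℤ, and let 0 ≤ b < a < 1 be real numbers. If E(Λ) is a Riesz basis for L²([a/N, (1+b)/N)), then E(Λ) is a Riesz basis for L²([0, b/N) ∪ [a/N, 1/N)). -/

import Mathlib

open MeasureTheory Real Set
open scoped Classical

/-- The exponential function `e^{2πiλx}`. -/
noncomputable def expf (l : ℝ) : ℝ → ℂ :=
  fun x => Complex.exp (2 * (Real.pi : ℂ) * Complex.I * (l : ℂ) * (x : ℂ))

/-- The system `E(Λ) = {e^{2πiλx} : λ ∈ Λ}` is a Riesz sequence in `L²(S)`: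
there are `0 < A ≤ B < ∞` such that
`A‖c‖² ≤ ‖∑ c_λ e^{2πiλ·}‖²_{L²(S)} ≤ B‖c‖²` for all (finitely supported) coefficients. -/
def IsRieszSeqExp (Λ S : Set ℝ) : Prop :=
  ∃ A B : ℝ, 0 < A ∧ A ≤ B ∧
    ∀ c : ↥Λ →₀ ℂ,
      (A * ∑ l ∈ c.support, ‖c l‖ ^ 2 ≤
          ∫ x in S, ‖∑ l ∈ c.support, c l * expf (l : ℝ) x‖ ^ 2) ∧
      (∫ x in S, ‖∑ l ∈ c.support, c l * expf (l : ℝ) x‖ ^ 2 ≤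
          B * ∑ l ∈ c.support, ‖c l‖ ^ 2)

/-- The system `E(Λ)` is a frame for `L²(S)`: there are `0 < A ≤ B < ∞` such that
`A‖f‖² ≤ ∑_{λ∈Λ} |⟨f, e^{2πiλ·}⟩|² ≤ B‖f‖²` for all `f ∈ L²(S)`. -/
def IsFrameExp (Λ S : Set ℝ) : Prop :=
  ∃ A B : ℝ, 0 < A ∧ A ≤ B ∧
    ∀ f : ℝ → ℂ, MemLp f 2 (volume.restrict S) →
      (A * ∫ x in S, ‖f x‖ ^ 2 ≤
          ∑' l : ↥Λ, ‖∫ x in S, f x * (starRingEnd ℂ) (expf (l : ℝ) x)‖ ^ 2) ∧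
      (∑' l : ↥Λ, ‖∫ x in S, f x * (starRingEnd ℂ) (expf (l : ℝ) x)‖ ^ 2 ≤
          B * ∫ x in S, ‖f x‖ ^ 2)

/-- The system `E(Λ)` is complete in `L²(S)`. -/
def IsCompleteExp (Λ S : Set ℝ) : Prop :=
  ∀ f : ℝ → ℂ, MemLp f 2 (volume.restrict S) →
    (∀ l ∈ Λ, (∫ x in S, f x * (starRingEnd ℂ) (expf l x)) = 0) →
    ∀ᵐ x ∂(volume.restrict S), f x = 0

/-- The system `E(Λ)` is a Riesz basis for `L²(S)`: a complete Riesz sequence. -/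
def IsRieszBasisExp (Λ S : Set ℝ) : Prop :=
  IsRieszSeqExp Λ S ∧ IsCompleteExp Λ S

/-- `A_{≥n}(N,S) = {t ∈ [0,1/N) : t + k/N ∈ S for at least n values of k ∈ {0,…,N-1}}`. -/
def Ageq (N : ℕ) (S : Set ℝ) (n : ℕ) : Set ℝ :=
  {t : ℝ | t ∈ Set.Ico (0 : ℝ) (1 / (N : ℝ)) ∧
    n ≤ ((Finset.range N).filter (fun k => t + (k : ℝ) / (N : ℝ) ∈ S)).card}

lemma continuous_expf (l : ℝ) : Continuous (expf l) :=
  Complex.continuous_exp.comp (continuous_const.mul Complex.continuous_ofReal)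

lemma norm_expf (l x : ℝ) : ‖expf l x‖ = 1 := by
  unfold expf
  rw [show 2*(Real.pi:ℂ)*Complex.I*(l:ℂ)*(x:ℂ) = ((2*Real.pi*l*x : ℝ):ℂ)*Complex.I by
    push_cast; ring]
  simpa using Complex.norm_exp_ofReal_mul_I (2*Real.pi*l*x)

lemma expf_periodic {N : ℕ} (hN : 0 < N) {l : ℝ} (hl : ∃ m : ℤ, l = (N:ℝ) * m) (x : ℝ) :
    expf l (x + 1 / N) = expf l x := by
  obtain ⟨m, rfl⟩ := hl
  have hNne : ((N:ℂ)) ≠ 0 := Nat.cast_ne_zero.mpr hN.ne'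
  unfold expf
  rw [show ((x + 1/(N:ℝ) : ℝ) : ℂ) = (x:ℂ) + 1/(N:ℂ) by push_cast; ring, mul_add,
    Complex.exp_add,
    show 2*(Real.pi:ℂ)*Complex.I*(((N:ℝ)*(m:ℤ) : ℝ):ℂ)*(1/(N:ℂ)) = (m:ℂ)*(2*(Real.pi:ℂ)*Complex.I) by
      push_cast; field_simp,
    Complex.exp_int_mul_two_pi_mul_I, mul_one]

lemma restrict_shift (c u v : ℝ) :
    volume.restrict (Set.Ico (u + c) (v + c)) =
      (volume.restrict (Set.Ico u v)).map (· + c) := by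
  have hemb : MeasurableEmbedding (fun x : ℝ => x + c) :=
    (MeasurableEquiv.addRight c).measurableEmbedding
  have h1 : (volume : Measure ℝ).map (· + c) = volume :=
    (measurePreserving_add_right volume c).map_eq
  calc volume.restrict (Set.Ico (u + c) (v + c))
      = ((volume : Measure ℝ).map (· + c)).restrict (Set.Ico (u + c) (v + c)) := by rw [h1]
    _ = (volume.restrict ((· + c) ⁻¹' Set.Ico (u + c) (v + c))).map (· + c) :=
        hemb.restrict_map _ _
    _ = (volume.restrict (Set.Ico u v)).map (· + c) := by
        rw [Set.preimage_add_const_Ico, add_sub_cancel_right, add_sub_cancel_right]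

lemma memLp_add_measure' {α E : Type*} [MeasurableSpace α] [NormedAddCommGroup E]
    {μ ν : Measure α} {f : α → E} (hμ : MemLp f 2 μ) (hν : MemLp f 2 ν) :
    MemLp f 2 (μ + ν) := by
  refine ⟨hμ.1.add_measure hν.1, ?_⟩
  rw [eLpNorm_lt_top_iff_lintegral_rpow_enorm_lt_top (by norm_num) (by norm_num),
    lintegral_add_measure]
  exact ENNReal.add_lt_top.2
    ⟨(eLpNorm_lt_top_iff_lintegral_rpow_enorm_lt_top (by norm_num) (by norm_num)).1 hμ.2,
     (eLpNorm_lt_top_iff_lintegral_rpow_enorm_lt_top (by norm_num) (by norm_num)).1 hν.2⟩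

lemma integrable_mul_conj_expf {u v l : ℝ} {F : ℝ → ℂ}
    (hF : MemLp F 2 (volume.restrict (Set.Ico u v))) :
    Integrable (fun x => F x * (starRingEnd ℂ) (expf l x)) (volume.restrict (Set.Ico u v)) := by
  haveI : IsFiniteMeasure (volume.restrict (Set.Ico u v)) :=
    ⟨by rw [Measure.restrict_apply_univ]; exact measure_Ico_lt_top⟩
  have hFi : Integrable F (volume.restrict (Set.Ico u v)) := hF.integrable (by norm_num)
  have hm : AEStronglyMeasurable (fun x => (starRingEnd ℂ) (expf l x))
      (volume.restrict (Set.Ico u v)) :=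
    (Complex.continuous_conj.comp (continuous_expf l)).aestronglyMeasurable
  have := hFi.bdd_mul hm (c := 1) (Filter.Eventually.of_forall fun x => by rw [RCLike.norm_conj, norm_expf])
  exact this.congr (Filter.Eventually.of_forall fun x => mul_comm _ _)

/-- Since exponentials with frequencies in `Nℤ` are `1/N`-periodic,
a Riesz basis `E(Λ)` for `L²([a/N,(1+b)/N))` with `Λ ⊂ Nℤ` is also a Riesz basis for
`L²([0,b/N) ∪ [a/N,1/N))`. -/
theorem stmt14 (N : ℕ) (hN : 0 < N) (Λ : Set ℝ)
    (hΛ : Λ ⊆ {x : ℝ | ∃ m : ℤ, x = (N : ℝ) * (m : ℝ)})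
    (a b : ℝ) (hb : 0 ≤ b) (hba : b < a) (ha : a < 1)
    (h : IsRieszBasisExp Λ (Set.Ico (a / N) ((1 + b) / N))) :
    IsRieszBasisExp Λ (Set.Ico (0 : ℝ) (b / N) ∪ Set.Ico (a / N) (1 / (N : ℝ))) := by
  have hN0 : (0:ℝ) < N := Nat.cast_pos.2 hN
  have h1 : a/N ≤ 1/(N:ℝ) := by gcongr
  have h2 : 1/(N:ℝ) ≤ (1+b)/N := by gcongr; linarith
  have h3 : b/N ≤ a/(N:ℝ) := by gcongr
  have hemb : MeasurableEmbedding (fun x : ℝ => x + 1/(N:ℝ)) :=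
    (MeasurableEquiv.addRight (1/(N:ℝ))).measurableEmbedding
  have hS1split : Set.Ico (a/N) ((1+b)/(N:ℝ)) =
      Set.Ico (a/N) (1/(N:ℝ)) ∪ Set.Ico (1/(N:ℝ)) ((1+b)/N) :=
    (Set.Ico_union_Ico_eq_Ico h1 h2).symm
  have hI2eq : Set.Ico (1/(N:ℝ)) ((1+b)/N) = Set.Ico (0 + 1/(N:ℝ)) (b/N + 1/(N:ℝ)) := by
    rw [zero_add, ← add_div, add_comm b 1]
  have hdisj01 : Disjoint (Set.Ico (0:ℝ) (b/N)) (Set.Ico (a/N) (1/(N:ℝ))) :=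
    Set.Ico_disjoint_Ico.2 (le_trans (min_le_left _ _) (le_trans h3 (le_max_right _ _)))
  have hdisj12 : Disjoint (Set.Ico (a/N) (1/(N:ℝ))) (Set.Ico (1/(N:ℝ)) ((1+b)/N)) :=
    Set.Ico_disjoint_Ico_same
  have hper : ∀ l ∈ Λ, ∀ x : ℝ, expf l (x + 1/(N:ℝ)) = expf l x := by
    intro l hl x
    exact expf_periodic hN (hΛ hl) x
  have hrI2 : volume.restrict (Set.Ico (1/(N:ℝ)) ((1+b)/N)) =
      (volume.restrict (Set.Ico (0:ℝ) (b/N))).map (fun x => x + 1/(N:ℝ)) := by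
    rw [hI2eq]; exact restrict_shift _ _ _
  obtain ⟨⟨A, B, hA, hAB, hRS⟩, hcomp⟩ := h
  constructor
  · -- Riesz sequence
    refine ⟨A, B, hA, hAB, fun co => ?_⟩
    have hFcont : Continuous (fun x => ‖∑ l ∈ co.support, co l * expf (l:ℝ) x‖ ^ 2) :=
      ((continuous_finset_sum _ fun l _ => continuous_const.mul (continuous_expf _)).norm).pow 2
    have hFint : ∀ u v : ℝ,
        IntegrableOn (fun x => ‖∑ l ∈ co.support, co l * expf (l:ℝ) x‖ ^ 2)
          (Set.Ico u v) volume := fun u v =>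
      (hFcont.integrableOn_Icc).mono_set Set.Ico_subset_Icc_self
    have hFper : ∀ x : ℝ,
        ‖∑ l ∈ co.support, co l * expf (l:ℝ) (x + 1/(N:ℝ))‖ ^ 2 =
        ‖∑ l ∈ co.support, co l * expf (l:ℝ) x‖ ^ 2 := by
      intro x
      congr 2
      exact Finset.sum_congr rfl fun l _ => by rw [hper (l:ℝ) l.2]
    have key : (∫ x in Set.Ico (0:ℝ) (b/N) ∪ Set.Ico (a/N) (1/(N:ℝ)),
          ‖∑ l ∈ co.support, co l * expf (l:ℝ) x‖ ^ 2) =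
        ∫ x in Set.Ico (a/N) ((1+b)/(N:ℝ)),
          ‖∑ l ∈ co.support, co l * expf (l:ℝ) x‖ ^ 2 := by
      have e2 : (∫ x in Set.Ico (1/(N:ℝ)) ((1+b)/N),
            ‖∑ l ∈ co.support, co l * expf (l:ℝ) x‖ ^ 2) =
          ∫ x in Set.Ico (0:ℝ) (b/N),
            ‖∑ l ∈ co.support, co l * expf (l:ℝ) x‖ ^ 2 := by
        rw [hrI2, hemb.integral_map]
        simp only [hFper]
      rw [hS1split,
        setIntegral_union hdisj01 measurableSet_Ico (hFint _ _) (hFint _ _),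
        setIntegral_union hdisj12 measurableSet_Ico (hFint _ _) (hFint _ _),
        e2, add_comm]
    rw [key]
    exact hRS co
  · -- completeness
    intro f hf horth
    set g : ℝ → ℂ := fun x => if x < 1/(N:ℝ) then f x else f (x - 1/(N:ℝ)) with hgdef
    have hrS2 : volume.restrict (Set.Ico (0:ℝ) (b/N) ∪ Set.Ico (a/N) (1/(N:ℝ))) =
        volume.restrict (Set.Ico (0:ℝ) (b/N)) + volume.restrict (Set.Ico (a/N) (1/(N:ℝ))) :=
      Measure.restrict_union hdisj01 measurableSet_Ico
    rw [hrS2] at hf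
    have hf0 : MemLp f 2 (volume.restrict (Set.Ico (0:ℝ) (b/N))) := hf.left_of_add_measure
    have hf1 : MemLp f 2 (volume.restrict (Set.Ico (a/N) (1/(N:ℝ)))) := hf.right_of_add_measure
    have hgI1 : ∀ x ∈ Set.Ico (a/N) (1/(N:ℝ)), g x = f x := by
      intro x hx; simp only [hgdef]; rw [if_pos hx.2]
    have hgshift : ∀ x ∈ Set.Ico (0:ℝ) (b/N), g (x + 1/(N:ℝ)) = f x := by
      intro x hx
      simp only [hgdef]
      rw [if_neg (not_lt.2 (le_add_of_nonneg_left hx.1)), add_sub_cancel_right]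
    have hg1 : MemLp g 2 (volume.restrict (Set.Ico (a/N) (1/(N:ℝ)))) :=
      (memLp_congr_ae ((ae_restrict_mem measurableSet_Ico).mono fun x hx => hgI1 x hx)).2 hf1
    have hg2 : MemLp g 2 (volume.restrict (Set.Ico (1/(N:ℝ)) ((1+b)/N))) := by
      rw [hrI2, hemb.memLp_map_measure_iff]
      exact (memLp_congr_ae ((ae_restrict_mem measurableSet_Ico).mono fun x hx =>
        hgshift x hx)).2 hf0
    have hrS1 : volume.restrict (Set.Ico (a/N) ((1+b)/(N:ℝ))) =
        volume.restrict (Set.Ico (a/N) (1/(N:ℝ))) +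
          volume.restrict (Set.Ico (1/(N:ℝ)) ((1+b)/N)) := by
      rw [hS1split]; exact Measure.restrict_union hdisj12 measurableSet_Ico
    have hgS1 : MemLp g 2 (volume.restrict (Set.Ico (a/N) ((1+b)/(N:ℝ)))) := by
      rw [hrS1]; exact memLp_add_measure' hg1 hg2
    have horthg : ∀ l ∈ Λ,
        (∫ x in Set.Ico (a/N) ((1+b)/(N:ℝ)), g x * (starRingEnd ℂ) (expf l x)) = 0 := by
      intro l hl
      have e1 : (∫ x in Set.Ico (a/N) (1/(N:ℝ)), g x * (starRingEnd ℂ) (expf l x)) =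
          ∫ x in Set.Ico (a/N) (1/(N:ℝ)), f x * (starRingEnd ℂ) (expf l x) :=
        setIntegral_congr_fun measurableSet_Ico fun x hx => by rw [hgI1 x hx]
      have e2 : (∫ x in Set.Ico (1/(N:ℝ)) ((1+b)/N), g x * (starRingEnd ℂ) (expf l x)) =
          ∫ x in Set.Ico (0:ℝ) (b/N), f x * (starRingEnd ℂ) (expf l x) := by
        rw [hrI2, hemb.integral_map]
        exact setIntegral_congr_fun measurableSet_Ico fun x hx => by
          rw [hgshift x hx, hper l hl x]
      calc (∫ x in Set.Ico (a/N) ((1+b)/(N:ℝ)), g x * (starRingEnd ℂ) (expf l x))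
          = (∫ x in Set.Ico (a/N) (1/(N:ℝ)), g x * (starRingEnd ℂ) (expf l x)) +
            ∫ x in Set.Ico (1/(N:ℝ)) ((1+b)/N), g x * (starRingEnd ℂ) (expf l x) := by
            rw [hS1split]
            exact setIntegral_union hdisj12 measurableSet_Ico
              (integrable_mul_conj_expf hg1) (integrable_mul_conj_expf hg2)
        _ = (∫ x in Set.Ico (0:ℝ) (b/N), f x * (starRingEnd ℂ) (expf l x)) +
            ∫ x in Set.Ico (a/N) (1/(N:ℝ)), f x * (starRingEnd ℂ) (expf l x) := by
            rw [e1, e2, add_comm]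
        _ = ∫ x in Set.Ico (0:ℝ) (b/N) ∪ Set.Ico (a/N) (1/(N:ℝ)),
              f x * (starRingEnd ℂ) (expf l x) :=
            (setIntegral_union hdisj01 measurableSet_Ico
              (integrable_mul_conj_expf hf0) (integrable_mul_conj_expf hf1)).symm
        _ = 0 := horth l hl
    have hzero := hcomp g hgS1 horthg
    rw [hrS1, ae_add_measure_iff] at hzero
    obtain ⟨hz1, hz2⟩ := hzero
    rw [hrI2, hemb.ae_map_iff] at hz2
    have hfz0 : ∀ᵐ x ∂volume.restrict (Set.Ico (0:ℝ) (b/N)), f x = 0 := by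
      filter_upwards [hz2, ae_restrict_mem measurableSet_Ico] with x hx hmem
      rw [← hgshift x hmem]; exact hx
    have hfz1 : ∀ᵐ x ∂volume.restrict (Set.Ico (a/N) (1/(N:ℝ))), f x = 0 := by
      filter_upwards [hz1, ae_restrict_mem measurableSet_Ico] with x hx hmem
      rw [← hgI1 x hmem]; exact hx
    rw [hrS2, ae_add_measure_iff]
    exact ⟨hfz0, hfz1⟩
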